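/- arXiv:1810.09072 — 2 statements merged into one kernel-verified Lean document; each statement's English description precedes it below -/
import Mathlib

section
/- There exists a function π : 2^ω → ω^ω such that for every r ∈ 2^ω, if f is an infinite partial function from ω to ω with f ⊆ π(r) (as a set of pairs), then r is uniquely determined by f; more precisely, if r, r' ∈ 2^ω and f is an infinite partial function with f ⊆ π(r) and f ⊆ π(r'), then r = r'. -/
/-- There is a function `π : 2^ω → ω^ω` such that any infinite partial function
contained in `π r` determines `r`. -/
theorem stmt0 :
    ∃ π : (ℕ → Bool) → (ℕ → ℕ),
      ∀ r r' : ℕ → Bool, ∀ s : Set (ℕ × ℕ),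
        (∀ p ∈ s, ∀ q ∈ s, p.1 = q.1 → p.2 = q.2) →
        s.Infinite →
        (∀ p ∈ s, π r p.1 = p.2) →
        (∀ p ∈ s, π r' p.1 = p.2) →
        r = r' := by
  refine ⟨fun r n => Encodable.encode (List.ofFn (fun i : Fin n => r i)), ?_⟩
  intro r r' s hfun hinf hr hr'
  have hinj : Set.InjOn Prod.fst s := by
    intro p hp q hq h
    exact Prod.ext h (hfun p hp q hq h)
  have himg : (Prod.fst '' s).Infinite := hinf.image hinj
  funext i
  obtain ⟨n, hn, hni⟩ := himg.exists_gt i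
  obtain ⟨p, hp, rfl⟩ := hn
  have h1 := hr p hp
  have h2 := hr' p hp
  have h : (List.ofFn (fun j : Fin p.1 => r j)) = (List.ofFn (fun j : Fin p.1 => r' j)) :=
    Encodable.encode_injective (h1.trans h2.symm)
  have := congrArg (fun l => l[i]?) h
  simpa [List.getElem?_ofFn, hni, Fin.isLt] using this
end

section
/- Under CH, there exists a universal function U : [ω₁]² → ω, i.e., for every F : [ω₁]² → ω there is an injective h : ω₁ → ω₁ with F(α,β) = U(h(α),h(β)) for all α ≠ β. -/
open Cardinal

/-- The set of countable ordinals, i.e. ω₁. -/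
abbrev Omega1 := {o : Ordinal.{0} // o < (Cardinal.aleph 1).ord}

noncomputable section
namespace Stmt7

instance : Nonempty Omega1 :=
  ⟨⟨0, Cardinal.lt_ord.mpr (by simpa using aleph0_lt_aleph_one.trans_le' aleph0_pos.le)⟩⟩

lemma mk_Omega1 : #Omega1 = Cardinal.lift.{1,0} (Cardinal.aleph 1) := by
  have h := Ordinal.mk_Iio_ordinal (Cardinal.aleph 1).ord
  rw [Cardinal.card_ord] at h
  exact h

lemma card_le_aleph0_of_lt {o : Ordinal.{0}} (h : o < (Cardinal.aleph 1).ord) :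
    o.card ≤ ℵ₀ := by
  have := Cardinal.lt_ord.mp h
  rwa [← succ_aleph0, Order.lt_succ_iff] at this

lemma countable_sub {o : Ordinal.{0}} (ho : o < (Cardinal.aleph 1).ord)
    (p : Omega1 → Prop) (hp : ∀ δ, p δ → δ.1 < o) : Countable {δ : Omega1 // p δ} := by
  rw [← Cardinal.mk_le_aleph0_iff]
  have h1 : #{δ : Omega1 // p δ} ≤ #(Set.Iio o) :=
    Cardinal.mk_le_of_injective (f := fun δ => ⟨δ.1.1, hp _ δ.2⟩)
      (fun a b hab => Subtype.ext (Subtype.ext (by simpa using congrArg Subtype.val hab)))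
  rw [Ordinal.mk_Iio_ordinal] at h1
  refine h1.trans ?_
  rw [← lift_aleph0.{1,0}]
  exact Cardinal.lift_le.mpr (card_le_aleph0_of_lt ho)

instance (β : Omega1) : Countable {α : Omega1 // α < β} :=
  countable_sub β.2 _ (fun δ h => h)

lemma succ_lt (γ : Omega1) : Order.succ γ.1 < (Cardinal.aleph 1).ord :=
  (Cardinal.isSuccLimit_ord (aleph0_le_aleph 1)).succ_lt γ.2

lemma countable_Iic (γ : Omega1) : Countable {δ : Omega1 // δ ≤ γ} :=
  countable_sub (succ_lt γ) _ (fun δ h => Order.lt_succ_iff.mpr (Subtype.coe_le_coe.mpr h))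

end Stmt7

namespace Stmt7

lemma unbounded_of_inj {T : Set Omega1} (j : Omega1 → Omega1)
    (hj : Function.Injective j) (hjT : ∀ x, j x ∈ T) (γ : Omega1) :
    ∃ δ ∈ T, γ < δ := by
  by_contra hcon
  push_neg at hcon
  have h1 : #Omega1 ≤ #{δ : Omega1 // δ ≤ γ} :=
    Cardinal.mk_le_of_injective (f := fun x => ⟨j x, hcon _ (hjT x)⟩)
      (fun a b hab => hj (by simpa using hab))
  have h2 : #{δ : Omega1 // δ ≤ γ} ≤ ℵ₀ := Cardinal.mk_le_aleph0_iff.mpr (countable_Iic γ)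
  have h3 := (h1.trans h2)
  rw [mk_Omega1, ← lift_aleph0.{1,0}, Cardinal.lift_le] at h3
  exact aleph0_lt_aleph_one.not_ge h3

lemma exists_surj (hCH : Cardinal.continuum.{0} = Cardinal.aleph.{0} 1) :
    ∃ ψ : Omega1 → Omega1 × (ℕ → Omega1 × ℕ), Function.Surjective ψ := by
  have haleph0 : (ℵ₀ : Cardinal.{1}) ≤ Cardinal.lift.{1,0} (Cardinal.aleph 1) := by
    rw [← lift_aleph0.{1,0}]
    exact Cardinal.lift_le.mpr (aleph0_le_aleph 1)
  have hS : #(ℕ → Omega1 × ℕ) = Cardinal.lift.{1,0} (Cardinal.aleph 1) := by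
    rw [Cardinal.mk_arrow, Cardinal.mk_prod, mk_Omega1, Cardinal.mk_nat,
      Cardinal.lift_uzero, Cardinal.lift_uzero, Cardinal.lift_aleph0,
      Cardinal.mul_eq_left haleph0 haleph0 Cardinal.aleph0_ne_zero, ← hCH,
      ← Cardinal.lift_aleph0.{1,0}, ← Cardinal.lift_power, Cardinal.continuum_power_aleph0]
  have hmk : #(Omega1 × (ℕ → Omega1 × ℕ)) ≤ #Omega1 := by
    rw [Cardinal.mk_prod, Cardinal.lift_id, Cardinal.lift_id, hS, mk_Omega1,
      Cardinal.mul_eq_self haleph0]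
  obtain ⟨f⟩ := (Cardinal.le_def _ _).mp hmk
  exact ⟨Function.invFun f, Function.invFun_surjective f.injective⟩

end Stmt7

namespace Stmt7

attribute [local instance] Classical.propDecidable

variable (c : Omega1 → ℕ → Omega1 × ℕ)

def rawU (b a : Omega1) : ℕ :=
  if hn : ∃ n, (c b n).1 = a then (c b (Nat.find hn)).2 else 0

def U (a b : Omega1) : ℕ :=
  if a < b then rawU c b a else if b < a then rawU c a b else 0

lemma U_symm (a b : Omega1) : U c a b = U c b a := by
  rcases lt_trichotomy a b with h | rfl | h
  · simp [U, h, asymm h]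
  · rfl
  · simp [U, h, asymm h]

lemma U_eq {a b : Omega1} (hab : a < b) {k : ℕ}
    (hex : ∃ n, (c b n).1 = a) (hfun : ∀ m, (c b m).1 = a → (c b m).2 = k) :
    U c a b = k := by
  rw [U, if_pos hab, rawU, dif_pos hex]
  exact hfun _ (Nat.find_spec hex)

lemma exists_step (hc : ∀ s γ, ∃ δ, γ < δ ∧ c δ = s) (β : Omega1)
    (v : {α : Omega1 // α < β} → Omega1) (hv : Function.Injective v)
    (w : {α : Omega1 // α < β} → ℕ) :
    ∃ δ : Omega1, ∀ a : {α : Omega1 // α < β}, v a < δ ∧ U c (v a) δ = w a := by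
  by_cases hne : Nonempty {α : Omega1 // α < β}
  · obtain ⟨f, hf⟩ := exists_surjective_nat {α : Omega1 // α < β}
    set s : ℕ → Omega1 × ℕ := fun n => (v (f n), w (f n)) with hs
    have hσ : (⨆ n, (v (f n)).1) < (Cardinal.aleph 1).ord :=
      by have key := @Ordinal.iSup_lt_omega_one ℕ _ (fun n => (v (f n)).1); rw [← Cardinal.ord_aleph] at key; exact key (fun n => (v (f n)).2)
    obtain ⟨δ, hδ1, hδ2⟩ := hc s ⟨_, hσ⟩
    have hlt : ∀ a : {α : Omega1 // α < β}, v a < δ := by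
      intro a
      obtain ⟨n, rfl⟩ := hf a
      have h1 : (v (f n)).1 ≤ ⨆ n, (v (f n)).1 := Ordinal.le_iSup _ n
      exact Subtype.coe_lt_coe.mp (lt_of_le_of_lt h1 hδ1)
    refine ⟨δ, fun a => ⟨hlt a, ?_⟩⟩
    obtain ⟨n, rfl⟩ := hf a
    refine U_eq c (hlt (f n)) ⟨n, by rw [hδ2]⟩ ?_
    intro m hm
    rw [hδ2] at hm ⊢
    have : f m = f n := hv hm
    simp [hs, this]
  · obtain ⟨δ, -, -⟩ := hc (fun _ => (Classical.arbitrary Omega1, 0)) β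
    exact ⟨δ, fun a => (hne ⟨a⟩).elim⟩

end Stmt7

end

/-- Under CH there is a universal function `U : [ω₁]² → ω`. -/
theorem stmt7 (hCH : Cardinal.continuum = Cardinal.aleph 1) :
    ∃ U : Omega1 → Omega1 → ℕ, (∀ α β, U α β = U β α) ∧
      ∀ F : Omega1 → Omega1 → ℕ, (∀ α β, F α β = F β α) →
        ∃ h : Omega1 → Omega1, Function.Injective h ∧
          ∀ α β : Omega1, α ≠ β → F α β = U (h α) (h β) := by
  have hCH0 : Cardinal.continuum.{0} = Cardinal.aleph.{0} 1 := by
    apply Cardinal.lift_injective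
    rw [Cardinal.lift_continuum, Cardinal.lift_aleph, Ordinal.lift_one]
    exact hCH
  obtain ⟨ψ, hψ⟩ := Stmt7.exists_surj hCH0
  set c : Omega1 → ℕ → Omega1 × ℕ := fun δ => (ψ δ).2 with hc_def
  have hc : ∀ s γ, ∃ δ, γ < δ ∧ c δ = s := by
    intro s γ
    choose j hj using fun x : Omega1 => hψ (x, s)
    have hjinj : Function.Injective j := by
      intro a b hab
      have h1 := hj a
      rw [hab, hj b] at h1
      exact (Prod.mk.injEq _ _ _ _ ▸ h1).1.symm
    obtain ⟨δ, hδT, hδγ⟩ := Stmt7.unbounded_of_inj (T := {δ | c δ = s}) j hjinj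
      (fun x => by simp only [Set.mem_setOf_eq, hc_def, hj x]) γ
    exact ⟨δ, hδγ, hδT⟩
  refine ⟨Stmt7.U c, Stmt7.U_symm c, ?_⟩
  intro F hF
  have wf : WellFounded ((· < ·) : Omega1 → Omega1 → Prop) :=
    InvImage.wf Subtype.val Ordinal.lt_wf
  set h : Omega1 → Omega1 := wf.fix
    (fun β ih => Classical.epsilon
      (fun δ => ∀ (α) (hα : α < β), ih α hα < δ ∧ Stmt7.U c (ih α hα) δ = F α β))
    with hh_def
  have hfix : ∀ β, h β = Classical.epsilon
      (fun δ => ∀ (α) (_ : α < β), h α < δ ∧ Stmt7.U c (h α) δ = F α β) := by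
    intro β
    rw [hh_def]
    exact wf.fix_eq _ β
  have key : ∀ β α, α < β → h α < h β ∧ Stmt7.U c (h α) (h β) = F α β := by
    intro β
    induction β using WellFounded.induction wf with
    | _ β ih =>
      have hinj : Function.Injective (fun a : {α : Omega1 // α < β} => h a.1) := by
        intro a b hab
        simp only at hab
        by_contra hne
        have hne' : a.1 ≠ b.1 := fun e => hne (Subtype.ext e)
        rcases hne'.lt_or_gt with hlt | hlt
        · exact absurd hab (ne_of_lt ((ih b.1 b.2 a.1 hlt).1))
        · exact absurd hab.symm (ne_of_lt ((ih a.1 a.2 b.1 hlt).1))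
      obtain ⟨δ, hδ⟩ := Stmt7.exists_step c hc β (fun a => h a.1) hinj (fun a => F a.1 β)
      have hspec := Classical.epsilon_spec
        (p := fun δ => ∀ (α) (_ : α < β), h α < δ ∧ Stmt7.U c (h α) δ = F α β)
        ⟨δ, fun α hα => hδ ⟨α, hα⟩⟩
      intro α hα
      rw [hfix β]
      exact hspec α hα
  have hmono : StrictMono h := fun a b hab => (key b a hab).1
  refine ⟨h, hmono.injective, ?_⟩
  intro α β hne
  rcases hne.lt_or_gt with hlt | hlt
  · exact ((key β α hlt).2).symm
  · rw [hF α β, Stmt7.U_symm c]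
    exact ((key α β hlt).2).symm
end
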